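/- Let a ∈ (1,√2) and let b ∈ (a/(a+1), (1+a)/(2a)). Let H = {(x,y) ∈ [0,1/a]×[0,1] : y = (2a/(a+1))·x + (a−1)/(a+1)} ∪ {(x,y) ∈ [0,1]×[0,b] : y = ((b+1)/2)·x + (b−1)/2} ⊆ [0,1]². Then H is closed in [0,1]², and both projections of H onto the first and second coordinates equal [0,1]; consequently H is the graph of a surjective upper semicontinuous set-valued function from [0,1] to [0,1]. -/

import Mathlib

theorem stmt_19 (a b : ℝ) (ha : a ∈ Set.Ioo 1 (Real.sqrt 2))
    (hb : b ∈ Set.Ioo (a / (a + 1)) ((1 + a) / (2 * a)))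
    (H : Set (ℝ × ℝ))
    (hH : H = {p : ℝ × ℝ | p.1 ∈ Set.Icc (0 : ℝ) (1 / a) ∧
        p.2 ∈ Set.Icc (0 : ℝ) 1 ∧ p.2 = (2 * a / (a + 1)) * p.1 + (a - 1) / (a + 1)} ∪
      {p : ℝ × ℝ | p.1 ∈ Set.Icc (0 : ℝ) 1 ∧ p.2 ∈ Set.Icc (0 : ℝ) b ∧
        p.2 = ((b + 1) / 2) * p.1 + (b - 1) / 2}) :
    IsClosed H ∧ H ⊆ Set.Icc (0 : ℝ) 1 ×ˢ Set.Icc (0 : ℝ) 1 ∧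
      Prod.fst '' H = Set.Icc (0 : ℝ) 1 ∧ Prod.snd '' H = Set.Icc (0 : ℝ) 1 := by
  obtain ⟨ha1, -⟩ := ha
  obtain ⟨hb1, hb2⟩ := hb
  have ha0 : (0 : ℝ) < a := by linarith
  have ha1' : (0 : ℝ) < a + 1 := by linarith
  have hb0 : 0 < b := lt_trans (by positivity) hb1
  have hblt : b < 1 := by
    have h1 : (1 + a) / (2 * a) < 1 := by
      rw [div_lt_one (by linarith)]; linarith
    linarith
  have hba : a < b * (a + 1) := (div_lt_iff₀ ha1').mp hb1
  have hkey : a * (1 - b) < 1 + b := by nlinarith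
  have hainv : 1 / a ≤ 1 := by rw [div_le_one ha0]; linarith
  subst hH
  refine ⟨?_, ?_, ?_, ?_⟩
  · apply IsClosed.union
    · exact (isClosed_Icc.preimage continuous_fst).inter
        ((isClosed_Icc.preimage continuous_snd).inter
          (isClosed_eq continuous_snd
            (((continuous_const.mul continuous_fst).add continuous_const))))
    · exact (isClosed_Icc.preimage continuous_fst).inter
        ((isClosed_Icc.preimage continuous_snd).inter
          (isClosed_eq continuous_snd
            (((continuous_const.mul continuous_fst).add continuous_const))))
  · rintro p (⟨⟨hx0, hx1⟩, hy, -⟩ | ⟨hx, ⟨hy0, hy1⟩, -⟩)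
    · exact ⟨⟨hx0, le_trans hx1 hainv⟩, hy⟩
    · exact ⟨hx, hy0, by linarith⟩
  · apply Set.Subset.antisymm
    · rintro x ⟨p, (⟨⟨hx0, hx1⟩, -, -⟩ | ⟨hx, -, -⟩), rfl⟩
      · exact ⟨hx0, le_trans hx1 hainv⟩
      · exact hx
    · rintro x ⟨hx0, hx1⟩
      by_cases h : x ≤ 1 / a
      · refine ⟨(x, 2 * a / (a + 1) * x + (a - 1) / (a + 1)),
          Or.inl ⟨⟨hx0, h⟩, ⟨?_, ?_⟩, rfl⟩, rfl⟩
        · have h1 : (0 : ℝ) ≤ (a - 1) / (a + 1) := div_nonneg (by linarith) (by linarith)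
          have h2 : (0 : ℝ) ≤ 2 * a / (a + 1) * x := mul_nonneg (by positivity) hx0
          linarith
        · have hxa : x * a ≤ 1 := (le_div_iff₀ ha0).mp h
          rw [div_mul_eq_mul_div, ← add_div, div_le_one ha1']
          nlinarith
      · push_neg at h
        have hxa : 1 < x * a := (div_lt_iff₀ ha0).mp h
        refine ⟨(x, (b + 1) / 2 * x + (b - 1) / 2),
          Or.inr ⟨⟨hx0, hx1⟩, ⟨?_, ?_⟩, rfl⟩, rfl⟩
        · nlinarith [mul_le_mul_of_nonneg_left hxa.le (show (0:ℝ) ≤ b + 1 by linarith)]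
        · nlinarith
  · apply Set.Subset.antisymm
    · rintro y ⟨p, (⟨-, hy, -⟩ | ⟨-, ⟨hy0, hy1⟩, -⟩), rfl⟩
      · exact hy
      · exact ⟨hy0, by linarith⟩
    · rintro y ⟨hy0, hy1⟩
      by_cases h : y ≤ b
      · refine ⟨((2 * y + 1 - b) / (1 + b), y),
          Or.inr ⟨⟨?_, ?_⟩, ⟨hy0, h⟩, ?_⟩, rfl⟩
        · exact div_nonneg (by linarith) (by linarith)
        · rw [div_le_one (by linarith)]; linarith
        · field_simp
          ring
      · push_neg at h
        refine ⟨(((a + 1) * y - (a - 1)) / (2 * a), y),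
          Or.inl ⟨⟨?_, ?_⟩, ⟨hy0, hy1⟩, ?_⟩, rfl⟩
        · apply div_nonneg _ (by linarith)
          nlinarith
        · rw [div_le_div_iff₀ (by linarith) ha0]
          nlinarith [mul_le_mul_of_nonneg_left hy1 (show (0:ℝ) ≤ a * (a + 1) by positivity)]
        · field_simp
          ring
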